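/- Let n ≥ 1 and let ξ = (ξ_0, …, ξ_{n−1}) ∈ 𝔐ⁿ. Set μ(t) = (1/n)·Σ_{i<n} ξ_i(t) and μ*(t) = inf { s ∈ [0,1] : μ(s) ≥ t }. Then: (a) for each i, the function ξ̃_i := ξ_i ∘ μ* is a continuous weakly increasing surjection of [0,1], i.e. ξ̃_i ∈ 𝔐; (b) (1/n)·Σ_{i<n} ξ̃_i = id_{[0,1]}, i.e. ξ̃ ∈ S_n; and (c) ξ̃_i ∘ μ = ξ_i for each i. -/

import Mathlib

/-- A function monotone on `[0,1]` whose image of `[0,1]` is `[0,1]` is continuous on `[0,1]`. -/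
lemma aux_monotoneOn_continuousOn {f : ℝ → ℝ} (hm : MonotoneOn f (Set.Icc 0 1))
    (him : f '' Set.Icc 0 1 = Set.Icc 0 1) : ContinuousOn f (Set.Icc 0 1) := by
  have hmaps : ∀ x ∈ Set.Icc (0:ℝ) 1, f x ∈ Set.Icc (0:ℝ) 1 := by
    intro x hx; rw [← him]; exact Set.mem_image_of_mem f hx
  set g : ℝ → ℝ := fun x => if x ∈ Set.Icc (0:ℝ) 1 then f x else x with hg
  have hgmono : Monotone g := by
    intro x y hxy
    show (if x ∈ Set.Icc (0:ℝ) 1 then f x else x) ≤ (if y ∈ Set.Icc (0:ℝ) 1 then f y else y)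
    by_cases hx : x ∈ Set.Icc (0:ℝ) 1 <;> by_cases hy : y ∈ Set.Icc (0:ℝ) 1
    · rw [if_pos hx, if_pos hy]; exact hm hx hy hxy
    · rw [if_pos hx, if_neg hy]
      have hy1 : 1 < y := by
        by_contra h; push_neg at h; exact hy ⟨hx.1.trans hxy, h⟩
      linarith [(hmaps x hx).2]
    · rw [if_neg hx, if_pos hy]
      have hx0 : x < 0 := by
        by_contra h; push_neg at h; exact hx ⟨h, hxy.trans hy.2⟩
      linarith [(hmaps y hy).1]
    · rw [if_neg hx, if_neg hy]; exact hxy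
  have hgsurj : Function.Surjective g := by
    intro y
    by_cases hy : y ∈ Set.Icc (0:ℝ) 1
    · rw [← him] at hy
      obtain ⟨c, hc, hfc⟩ := hy
      exact ⟨c, by simp only [hg, hc, if_pos]; exact hfc⟩
    · exact ⟨y, by simp only [hg, hy, if_neg, if_false]⟩
  have hgcont : Continuous g := hgmono.continuous_of_surjective hgsurj
  exact (hgcont.continuousOn).congr (fun x hx => by simp only [hg, hx, if_pos])

/-- For an `n`-tuple `ξ` of continuous weakly increasing surjections of `[0,1]`, with
`μ = (1/n) Σ ξᵢ` and `μ*(t) = inf {s ∈ [0,1] : μ(s) ≥ t}`, the tuple `ξ̃ = ξ ∘ μ*`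
consists of continuous weakly increasing surjections, averages to the identity, and
satisfies `ξ̃ᵢ ∘ μ = ξᵢ`. -/
theorem stmt_12 (n : ℕ) (hn : 1 ≤ n) (ξ : Fin n → ℝ → ℝ)
    (hcont : ∀ i, ContinuousOn (ξ i) (Set.Icc 0 1))
    (hmono : ∀ i, MonotoneOn (ξ i) (Set.Icc 0 1))
    (hsurj : ∀ i, ξ i '' Set.Icc 0 1 = Set.Icc 0 1)
    (μ : ℝ → ℝ) (hμ : ∀ t, μ t = (1 / n : ℝ) * ∑ i, ξ i t)
    (μs : ℝ → ℝ) (hμs : ∀ t, μs t = sInf {s ∈ Set.Icc (0 : ℝ) 1 | t ≤ μ s}) :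
    (∀ i, ContinuousOn (ξ i ∘ μs) (Set.Icc 0 1) ∧ MonotoneOn (ξ i ∘ μs) (Set.Icc 0 1) ∧
        (ξ i ∘ μs) '' Set.Icc 0 1 = Set.Icc 0 1) ∧
      (∀ t ∈ Set.Icc (0 : ℝ) 1, (1 / n : ℝ) * ∑ i, (ξ i ∘ μs) t = t) ∧
      (∀ i, ∀ t ∈ Set.Icc (0 : ℝ) 1, (ξ i ∘ μs) (μ t) = ξ i t) := by
  have hn0 : (n : ℝ) ≠ 0 := Nat.cast_ne_zero.2 (by omega)
  have hmaps : ∀ i, ∀ x ∈ Set.Icc (0:ℝ) 1, ξ i x ∈ Set.Icc (0:ℝ) 1 := by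
    intro i x hx; rw [← hsurj i]; exact Set.mem_image_of_mem _ hx
  have h01 : (0:ℝ) ∈ Set.Icc (0:ℝ) 1 := by constructor <;> norm_num
  have h11 : (1:ℝ) ∈ Set.Icc (0:ℝ) 1 := by constructor <;> norm_num
  have hξ0 : ∀ i, ξ i 0 = 0 := by
    intro i
    have h0 : (0:ℝ) ∈ ξ i '' Set.Icc 0 1 := by rw [hsurj i]; exact h01
    obtain ⟨c, hc, hfc⟩ := h0
    refine le_antisymm ?_ (hmaps i 0 h01).1
    calc ξ i 0 ≤ ξ i c := hmono i h01 hc hc.1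
      _ = 0 := hfc
  have hξ1 : ∀ i, ξ i 1 = 1 := by
    intro i
    have h1 : (1:ℝ) ∈ ξ i '' Set.Icc 0 1 := by rw [hsurj i]; exact h11
    obtain ⟨c, hc, hfc⟩ := h1
    refine le_antisymm (hmaps i 1 h11).2 ?_
    calc (1:ℝ) = ξ i c := hfc.symm
      _ ≤ ξ i 1 := hmono i hc h11 hc.2
  have hμmono : MonotoneOn μ (Set.Icc 0 1) := by
    intro x hx y hy hxy
    rw [hμ x, hμ y]
    have : (0:ℝ) ≤ 1 / n := by positivity
    exact mul_le_mul_of_nonneg_left (Finset.sum_le_sum fun i _ => hmono i hx hy hxy) this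
  have hμcont : ContinuousOn μ (Set.Icc 0 1) := by
    have : ContinuousOn (fun t => (1 / n : ℝ) * ∑ i, ξ i t) (Set.Icc 0 1) :=
      continuousOn_const.mul (continuousOn_finset_sum Finset.univ fun i _ => hcont i)
    exact this.congr fun x _ => hμ x
  have hμ0 : μ 0 = 0 := by rw [hμ]; simp [hξ0]
  have hμ1 : μ 1 = 1 := by
    rw [hμ]; simp only [hξ1]
    rw [Finset.sum_const, Finset.card_univ, Fintype.card_fin, nsmul_eq_mul, mul_one]
    field_simp
  have hμmaps : ∀ x ∈ Set.Icc (0:ℝ) 1, μ x ∈ Set.Icc (0:ℝ) 1 := fun x hx =>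
    ⟨hμ0 ▸ hμmono h01 hx hx.1, hμ1 ▸ hμmono hx h11 hx.2⟩
  -- Facts about the set A t
  set A : ℝ → Set ℝ := fun t => {s ∈ Set.Icc (0:ℝ) 1 | t ≤ μ s} with hA
  have hAne : ∀ t ∈ Set.Icc (0:ℝ) 1, (A t).Nonempty := fun t ht => ⟨1, ⟨h11, by rw [hμ1]; exact ht.2⟩⟩
  have hAbdd : ∀ t, BddBelow (A t) := fun t => ⟨0, fun s hs => hs.1.1⟩
  have hAclosed : ∀ t, IsClosed (A t) := by
    intro t
    have : A t = Set.Icc (0:ℝ) 1 ∩ μ ⁻¹' Set.Ici t := by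
      ext s; simp [hA, Set.mem_setOf_eq, and_comm]
    rw [this]
    exact hμcont.preimage_isClosed_of_isClosed isClosed_Icc isClosed_Ici
  have hμsA : ∀ t ∈ Set.Icc (0:ℝ) 1, μs t ∈ A t := by
    intro t ht
    rw [hμs t]
    exact (hAclosed t).csInf_mem (hAne t ht) (hAbdd t)
  have hμsmem : ∀ t ∈ Set.Icc (0:ℝ) 1, μs t ∈ Set.Icc (0:ℝ) 1 := fun t ht => (hμsA t ht).1
  -- μ (μs t) = t for t ∈ [0,1]
  have hμμs : ∀ t ∈ Set.Icc (0:ℝ) 1, μ (μs t) = t := by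
    intro t ht
    have hivt : t ∈ μ '' Set.Icc 0 1 := by
      apply intermediate_value_Icc zero_le_one hμcont
      rw [hμ0, hμ1]; exact ht
    obtain ⟨s, hs, hμst⟩ := hivt
    have hsA : s ∈ A t := ⟨hs, hμst.ge⟩
    have hle : μs t ≤ s := by rw [hμs t]; exact csInf_le (hAbdd t) hsA
    refine le_antisymm ?_ (hμsA t ht).2
    calc μ (μs t) ≤ μ s := hμmono (hμsmem t ht) hs hle
      _ = t := hμst
  -- part (c)
  have hc : ∀ i, ∀ s ∈ Set.Icc (0:ℝ) 1, ξ i (μs (μ s)) = ξ i s := by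
    intro i s hs
    have hμsmem' := hμsmem (μ s) (hμmaps s hs)
    have hrle : μs (μ s) ≤ s := by
      rw [hμs (μ s)]; exact csInf_le (hAbdd (μ s)) ⟨hs, le_refl _⟩
    have hμeq : μ (μs (μ s)) = μ s := hμμs (μ s) (hμmaps s hs)
    have hsumeq : ∑ j, ξ j (μs (μ s)) = ∑ j, ξ j s := by
      have h1 : (1 / n : ℝ) * ∑ j, ξ j (μs (μ s)) = (1 / n : ℝ) * ∑ j, ξ j s := by
        rw [← hμ, ← hμ, hμeq]
      exact mul_left_cancel₀ (one_div_ne_zero hn0) h1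
    have hle : ∀ j ∈ Finset.univ, ξ j (μs (μ s)) ≤ ξ j s :=
      fun j _ => hmono j hμsmem' hs hrle
    exact (Finset.sum_eq_sum_iff_of_le hle).1 hsumeq i (Finset.mem_univ i)
  -- monotonicity of ξ i ∘ μs
  have hμsmono : ∀ ⦃t⦄, t ∈ Set.Icc (0:ℝ) 1 → ∀ ⦃t'⦄, t' ∈ Set.Icc (0:ℝ) 1 → t ≤ t' → μs t ≤ μs t' := by
    intro t ht t' ht' htt'
    rw [hμs t, hμs t']
    exact csInf_le_csInf (hAbdd t) (hAne t' ht') (fun s hs => ⟨hs.1, htt'.trans hs.2⟩)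
  have hmono' : ∀ i, MonotoneOn (ξ i ∘ μs) (Set.Icc 0 1) := by
    intro i t ht t' ht' htt'
    exact hmono i (hμsmem t ht) (hμsmem t' ht') (hμsmono ht ht' htt')
  -- image of ξ i ∘ μs
  have himg : ∀ i, (ξ i ∘ μs) '' Set.Icc 0 1 = Set.Icc 0 1 := by
    intro i
    apply Set.Subset.antisymm
    · rintro y ⟨t, ht, rfl⟩
      exact hmaps i (μs t) (hμsmem t ht)
    · intro y hy
      have : y ∈ ξ i '' Set.Icc 0 1 := by rw [hsurj i]; exact hy
      obtain ⟨s, hs, hfs⟩ := this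
      exact ⟨μ s, hμmaps s hs, by simp only [Function.comp_apply]; rw [hc i s hs]; exact hfs⟩
  refine ⟨fun i => ⟨aux_monotoneOn_continuousOn (hmono' i) (himg i), hmono' i, himg i⟩, ?_, ?_⟩
  · intro t ht
    have := hμμs t ht
    rw [hμ (μs t)] at this
    simpa using this
  · intro i t ht
    exact hc i t ht
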